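/- Let K, C ⊆ ℝⁿ be convex bodies with C having nonempty interior. Then K is complete with respect to C if and only if K satisfies the spherical intersection property with respect to C−C, i.e., K = ⋂_{x ∈ bd(K)} (x + (D(K,C)/2)•(C−C)), where bd(K) denotes the boundary of K. -/

import Mathlib

open Pointwise

/-- Euclidean n-space. -/
abbrev Euc (n : ℕ) : Type := EuclideanSpace ℝ (Fin n)

/-- A convex body: a nonempty compact convex subset of ℝⁿ. -/
def IsBody {n : ℕ} (K : Set (Euc n)) : Prop := Convex ℝ K ∧ IsCompact K ∧ K.Nonempty

/-- Support function `h(K,u) = sup_{x ∈ K} ⟨u,x⟩`. -/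
noncomputable def suppF {n : ℕ} (K : Set (Euc n)) (u : Euc n) : ℝ :=
  sSup ((fun x => (inner ℝ u x : ℝ)) '' K)

/-- The s-breadth `b_s(K,C) = 2 h(K-K,s) / h(C-C,s)` (here `K - K` is the pointwise
(Minkowski) difference body). -/
noncomputable def breadthF {n : ℕ} (K C : Set (Euc n)) (s : Euc n) : ℝ :=
  2 * suppF (K - K) s / suppF (C - C) s

/-- The diameter `D(K,C) = sup_{s ≠ 0} b_s(K,C)`. -/
noncomputable def diamF {n : ℕ} (K C : Set (Euc n)) : ℝ :=
  sSup {d : ℝ | ∃ s : Euc n, s ≠ 0 ∧ d = breadthF K C s}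

/-- The minimal width `w(K,C) = inf_{s ≠ 0} b_s(K,C)`. -/
noncomputable def widthF {n : ℕ} (K C : Set (Euc n)) : ℝ :=
  sInf {d : ℝ | ∃ s : Euc n, s ≠ 0 ∧ d = breadthF K C s}

/-- The circumradius `R(K,C) = inf {λ ≥ 0 : ∃ c, K ⊆ c + λ•C}`. -/
noncomputable def circumF {n : ℕ} (K C : Set (Euc n)) : ℝ :=
  sInf {l : ℝ | 0 ≤ l ∧ ∃ c : Euc n, K ⊆ c +ᵥ l • C}

/-- The inradius `r(K,C) = sup {λ ≥ 0 : ∃ c, c + λ•C ⊆ K}`. -/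
noncomputable def inradF {n : ℕ} (K C : Set (Euc n)) : ℝ :=
  sSup {l : ℝ | 0 ≤ l ∧ ∃ c : Euc n, c +ᵥ l • C ⊆ K}

/-- `K` is (diametrically) complete with respect to `C`. -/
def CompleteWrt {n : ℕ} (K C : Set (Euc n)) : Prop :=
  ∀ K' : Set (Euc n), IsBody K' → K ⊂ K' → diamF K C < diamF K' C

/-- `K` is reduced with respect to `C`. -/
def ReducedWrt {n : ℕ} (K C : Set (Euc n)) : Prop :=
  ∀ K' : Set (Euc n), IsBody K' → K' ⊂ K → widthF K' C < widthF K C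

/-- `K` is of constant width with respect to `C`. -/
def ConstWidthWrt {n : ℕ} (K C : Set (Euc n)) : Prop := widthF K C = diamF K C

/-- `C` is perfect: every complete body is of constant width. -/
def PerfectBody {n : ℕ} (C : Set (Euc n)) : Prop :=
  ∀ K : Set (Euc n), IsBody K → CompleteWrt K C → ConstWidthWrt K C

/-- A polytope: the convex hull of finitely many points. -/
def IsPolytope {n : ℕ} (P : Set (Euc n)) : Prop :=
  ∃ V : Finset (Euc n), P = convexHull ℝ (V : Set (Euc n))

/-- An n-simplex: the convex hull of n+1 affinely independent points. -/
def IsSimplex {n : ℕ} (S : Set (Euc n)) : Prop :=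
  ∃ p : Fin (n + 1) → Euc n, AffineIndependent ℝ p ∧ S = convexHull ℝ (Set.range p)

/-- The Minkowski asymmetry `s(K) = R(-K,K)`. -/
noncomputable def minkAsym {n : ℕ} (K : Set (Euc n)) : ℝ := circumF (-K) K

/-- `K` is Minkowski-centered: `-K ⊆ s(K) • K`. -/
def MinkCentered {n : ℕ} (K : Set (Euc n)) : Prop := -K ⊆ minkAsym K • K

/-- Optimal containment `A ⊆^opt B`. -/
def SubsetOpt {n : ℕ} (A B : Set (Euc n)) : Prop :=
  A ⊆ B ∧ ∀ ρ : ℝ, ρ < 1 → ∀ c : Euc n, ¬ (A ⊆ c +ᵥ ρ • B)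

/-- The face of `P` with outer normal `a`. -/
noncomputable def faceOf {n : ℕ} (P : Set (Euc n)) (a : Euc n) : Set (Euc n) :=
  {x ∈ P | (inner ℝ a x : ℝ) = suppF P a}

/-- `F` is a facet (an (n-1)-dimensional face) of `P`. -/
def IsFacetOf {n : ℕ} (P F : Set (Euc n)) : Prop :=
  ∃ a : Euc n, a ≠ 0 ∧ F = faceOf P a ∧ Module.finrank ℝ (vectorSpan ℝ F) = n - 1

/-- `Kstar` is a completion of `K` with respect to `C`. -/
def IsCompletionOf {n : ℕ} (Kstar K C : Set (Euc n)) : Prop :=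
  IsBody Kstar ∧ K ⊆ Kstar ∧ diamF Kstar C = diamF K C ∧ CompleteWrt Kstar C

variable {n : ℕ}

lemma suppF_bdd {K : Set (Euc n)} (hK : IsCompact K) (s : Euc n) :
    BddAbove ((fun x => (inner ℝ s x : ℝ)) '' K) :=
  (hK.image (continuous_const.inner continuous_id)).bddAbove

lemma le_suppF {K : Set (Euc n)} (hK : IsCompact K) {x : Euc n} (hx : x ∈ K) (s : Euc n) :
    (inner ℝ s x : ℝ) ≤ suppF K s :=
  le_csSup (suppF_bdd hK s) (Set.mem_image_of_mem _ hx)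

lemma suppF_le {K : Set (Euc n)} (hne : K.Nonempty) {s : Euc n} {a : ℝ}
    (h : ∀ x ∈ K, (inner ℝ s x : ℝ) ≤ a) : suppF K s ≤ a :=
  csSup_le (hne.image _) (by rintro _ ⟨x, hx, rfl⟩; exact h x hx)

lemma suppF_mono {K K' : Set (Euc n)} (hK : K.Nonempty) (hK' : IsCompact K')
    (h : K ⊆ K') (s : Euc n) : suppF K s ≤ suppF K' s :=
  suppF_le hK fun x hx => le_suppF hK' (h hx) s

lemma suppF_zero {K : Set (Euc n)} (hK : K.Nonempty) : suppF K 0 = 0 := by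
  have : (fun x => (inner ℝ (0 : Euc n) x : ℝ)) '' K = {0} := by
    apply Set.eq_singleton_iff_nonempty_unique_mem.2
    exact ⟨hK.image _, by rintro _ ⟨x, hx, rfl⟩; simp⟩
  rw [suppF, this, csSup_singleton]

lemma suppF_singleton (y s : Euc n) : suppF {y} s = (inner ℝ s y : ℝ) := by
  rw [suppF, Set.image_singleton, csSup_singleton]

lemma suppF_add {A B : Set (Euc n)} (hA : IsCompact A) (hB : IsCompact B)
    (hAne : A.Nonempty) (hBne : B.Nonempty) (s : Euc n) :
    suppF (A + B) s = suppF A s + suppF B s := by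
  have himg : (fun x => (inner ℝ s x : ℝ)) '' (A + B)
      = ((fun x => (inner ℝ s x : ℝ)) '' A) + ((fun x => (inner ℝ s x : ℝ)) '' B) := by
    ext r
    constructor
    · rintro ⟨_, ⟨a, ha, b, hb, rfl⟩, rfl⟩
      exact ⟨_, Set.mem_image_of_mem _ ha, _, Set.mem_image_of_mem _ hb, (inner_add_right s a b).symm⟩
    · rintro ⟨_, ⟨a, ha, rfl⟩, _, ⟨b, hb, rfl⟩, rfl⟩
      exact ⟨a + b, Set.add_mem_add ha hb, inner_add_right s a b⟩
  rw [suppF, himg, csSup_add (hAne.image _) (suppF_bdd hA s) (hBne.image _) (suppF_bdd hB s)]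
  rfl

lemma suppF_neg (A : Set (Euc n)) (s : Euc n) : suppF (-A) s = suppF A (-s) := by
  have : (fun x => (inner ℝ s x : ℝ)) '' (-A) = (fun x => (inner ℝ (-s) x : ℝ)) '' A := by
    ext r
    constructor
    · rintro ⟨x, hx, rfl⟩
      exact ⟨-x, hx, by simp⟩
    · rintro ⟨x, hx, rfl⟩
      exact ⟨-x, by simpa using hx, by simp⟩
  rw [suppF, this]; rfl

lemma suppF_sub {A B : Set (Euc n)} (hA : IsCompact A) (hB : IsCompact B)
    (hAne : A.Nonempty) (hBne : B.Nonempty) (s : Euc n) :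
    suppF (A - B) s = suppF A s + suppF B (-s) := by
  rw [sub_eq_add_neg, suppF_add hA hB.neg hAne hBne.neg, suppF_neg]

lemma suppF_smul {A : Set (Euc n)} {c : ℝ} (hc : 0 ≤ c) (s : Euc n) :
    suppF (c • A) s = c * suppF A s := by
  have : (fun x => (inner ℝ s x : ℝ)) '' (c • A) = c • ((fun x => (inner ℝ s x : ℝ)) '' A) := by
    ext r
    constructor
    · rintro ⟨_, ⟨a, ha, rfl⟩, rfl⟩
      exact ⟨_, Set.mem_image_of_mem _ ha, (real_inner_smul_right s a c).symm⟩
    · rintro ⟨_, ⟨a, ha, rfl⟩, rfl⟩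
      exact ⟨c • a, Set.smul_mem_smul_set ha, real_inner_smul_right s a c⟩
  rw [suppF, this, Real.sSup_smul_of_nonneg hc]; rfl

lemma suppF_insert {A : Set (Euc n)} (hA : IsCompact A) (hAne : A.Nonempty) (y s : Euc n) :
    suppF (insert y A) s = max (inner ℝ s y : ℝ) (suppF A s) := by
  rw [suppF, Set.image_insert_eq, csSup_insert (suppF_bdd hA s) (hAne.image _)]
  rfl

lemma halfspace_closed (s : Euc n) (c : ℝ) : IsClosed {z : Euc n | (inner ℝ s z : ℝ) ≤ c} :=
  isClosed_le (continuous_const.inner continuous_id) continuous_const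

lemma halfspace_convex (s : Euc n) (c : ℝ) : Convex ℝ {z : Euc n | (inner ℝ s z : ℝ) ≤ c} := by
  intro a ha b hb p q hp hq hpq
  simp only [Set.mem_setOf_eq] at *
  rw [inner_add_right, real_inner_smul_right, real_inner_smul_right]
  calc p * (inner ℝ s a : ℝ) + q * (inner ℝ s b : ℝ)
        ≤ p * c + q * c :=
        add_le_add (mul_le_mul_of_nonneg_left ha hp) (mul_le_mul_of_nonneg_left hb hq)
    _ = c := by rw [← add_mul, hpq, one_mul]

lemma isCompact_closure_convexHull {A : Set (Euc n)} (hA : IsCompact A) :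
    IsCompact (closure (convexHull ℝ A)) :=
  Metric.isCompact_of_isClosed_isBounded isClosed_closure
    ((isBounded_convexHull.2 hA.isBounded).closure)

lemma suppF_closure_convexHull {A : Set (Euc n)} (hA : IsCompact A) (hAne : A.Nonempty)
    (s : Euc n) : suppF (closure (convexHull ℝ A)) s = suppF A s := by
  refine le_antisymm ?_ (suppF_mono hAne (isCompact_closure_convexHull hA)
    ((subset_convexHull ℝ A).trans subset_closure) s)
  refine suppF_le (hAne.mono ((subset_convexHull ℝ A).trans subset_closure)) ?_
  intro x hx
  have : closure (convexHull ℝ A) ⊆ {z : Euc n | (inner ℝ s z : ℝ) ≤ suppF A s} :=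
    closure_minimal (convexHull_min (fun z hz => le_suppF hA hz s) (halfspace_convex s _))
      (halfspace_closed s _)
  exact this hx

/-- separation -/
lemma exists_suppF_lt {B : Set (Euc n)} (hB : IsCompact B) (hBc : Convex ℝ B)
    (hBne : B.Nonempty) {y : Euc n} (hy : y ∉ B) :
    ∃ s : Euc n, suppF B s < (inner ℝ s y : ℝ) := by
  obtain ⟨f, u, hfB, hfy⟩ := geometric_hahn_banach_closed_point hBc hB.isClosed hy
  refine ⟨(InnerProductSpace.toDual ℝ (Euc n)).symm f, ?_⟩
  have hrepr : ∀ x : Euc n, (inner ℝ ((InnerProductSpace.toDual ℝ (Euc n)).symm f) x : ℝ) = f x :=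
    fun x => InnerProductSpace.toDual_symm_apply
  rw [hrepr]
  refine lt_of_le_of_lt (suppF_le hBne ?_) hfy
  intro x hx
  rw [hrepr]
  exact (hfB x hx).le

lemma mem_of_forall_inner_le {B : Set (Euc n)} (hB : IsCompact B) (hBc : Convex ℝ B)
    (hBne : B.Nonempty) {y : Euc n} (h : ∀ s : Euc n, (inner ℝ s y : ℝ) ≤ suppF B s) :
    y ∈ B := by
  by_contra hy
  obtain ⟨s, hs⟩ := exists_suppF_lt hB hBc hBne hy
  exact absurd (h s) (not_le.2 hs)


lemma isCompact_sub {A B : Set (Euc n)} (hA : IsCompact A) (hB : IsCompact B) :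
    IsCompact (A - B) := by
  have : A - B = (fun p : Euc n × Euc n => p.1 - p.2) '' (A ×ˢ B) := by
    ext z
    constructor
    · rintro ⟨a, ha, b, hb, rfl⟩
      exact ⟨(a, b), ⟨ha, hb⟩, rfl⟩
    · rintro ⟨⟨a, b⟩, ⟨ha, hb⟩, rfl⟩
      exact ⟨a, ha, b, hb, rfl⟩
  rw [this]
  exact (hA.prod hB).image (continuous_fst.sub continuous_snd)

lemma nonempty_sub {A B : Set (Euc n)} (hA : A.Nonempty) (hB : B.Nonempty) :
    (A - B).Nonempty := by
  obtain ⟨a, ha⟩ := hA; obtain ⟨b, hb⟩ := hB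
  exact ⟨a - b, Set.sub_mem_sub ha hb⟩

lemma zero_mem_sub {A : Set (Euc n)} (hA : A.Nonempty) : (0 : Euc n) ∈ A - A := by
  obtain ⟨a, ha⟩ := hA
  simpa using Set.sub_mem_sub ha ha

lemma suppF_sub_nonneg {A : Set (Euc n)} (hA : IsCompact A) (hAne : A.Nonempty) (s : Euc n) :
    0 ≤ suppF (A - A) s := by
  simpa using le_suppF (isCompact_sub hA hA) (zero_mem_sub hAne) s

/-- lower bound on the support of `C - C` from an interior point. -/
lemma CC_lower {C : Set (Euc n)} (hC : IsBody C) (hCint : (interior C).Nonempty) :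
    ∃ ε > (0:ℝ), ∀ s : Euc n, ε / 2 * ‖s‖ ≤ suppF (C - C) s := by
  obtain ⟨c, hc⟩ := hCint
  obtain ⟨ε, hε, hball⟩ := Metric.isOpen_iff.1 isOpen_interior c hc
  refine ⟨ε, hε, fun s => ?_⟩
  rcases eq_or_ne s 0 with rfl | hs
  · simp [suppF_zero (nonempty_sub hC.2.2 hC.2.2)]
  have hsn : (0:ℝ) < ‖s‖ := norm_pos_iff.2 hs
  set x : Euc n := c + (ε / (2 * ‖s‖)) • s with hx
  have hxC : x ∈ C := by
    apply interior_subset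
    apply hball
    have : dist x c = ε / 2 := by
      rw [dist_eq_norm, hx, add_sub_cancel_left, norm_smul]
      rw [Real.norm_eq_abs, abs_of_pos (by positivity)]
      field_simp
    rw [Metric.mem_ball, this]
    linarith
  have hmem : x - c ∈ C - C := Set.sub_mem_sub hxC (interior_subset hc)
  have hinner : (inner ℝ s (x - c) : ℝ) = ε / 2 * ‖s‖ := by
    rw [hx, add_sub_cancel_left, real_inner_smul_right, real_inner_self_eq_norm_sq]
    field_simp
  calc ε / 2 * ‖s‖ = (inner ℝ s (x - c) : ℝ) := hinner.symm
    _ ≤ suppF (C - C) s := le_suppF (isCompact_sub hC.2.1 hC.2.1) hmem s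

lemma CC_pos {C : Set (Euc n)} (hC : IsBody C) (hCint : (interior C).Nonempty)
    {s : Euc n} (hs : s ≠ 0) : 0 < suppF (C - C) s := by
  obtain ⟨ε, hε, h⟩ := CC_lower hC hCint
  have := h s
  have hsn : (0:ℝ) < ‖s‖ := norm_pos_iff.2 hs
  nlinarith

lemma breadth_nonneg {K C : Set (Euc n)} (hK : IsBody K) (hC : IsBody C) (s : Euc n) :
    0 ≤ breadthF K C s :=
  div_nonneg (by have := suppF_sub_nonneg hK.2.1 hK.2.2 s; linarith)
    (suppF_sub_nonneg hC.2.1 hC.2.2 s)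

lemma breadth_bddAbove {K C : Set (Euc n)} (hK : IsBody K) (hC : IsBody C)
    (hCint : (interior C).Nonempty) :
    BddAbove {d : ℝ | ∃ s : Euc n, s ≠ 0 ∧ d = breadthF K C s} := by
  obtain ⟨ε, hε, hlow⟩ := CC_lower hC hCint
  obtain ⟨M, hM⟩ := (isCompact_sub hK.2.1 hK.2.1).isBounded.subset_closedBall 0
  have hM0 : 0 ≤ M := by
    have := hM (zero_mem_sub hK.2.2)
    simpa using this
  refine ⟨2 * M / (ε / 2), ?_⟩
  rintro d ⟨s, hs, rfl⟩
  have hsn : (0:ℝ) < ‖s‖ := norm_pos_iff.2 hs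
  have h1 : suppF (K - K) s ≤ M * ‖s‖ := by
    apply suppF_le (nonempty_sub hK.2.2 hK.2.2)
    intro x hx
    calc (inner ℝ s x : ℝ) ≤ ‖s‖ * ‖x‖ := real_inner_le_norm s x
      _ ≤ ‖s‖ * M := by
          have := hM hx
          simp only [Metric.mem_closedBall, dist_zero_right] at this
          exact mul_le_mul_of_nonneg_left this (norm_nonneg s)
      _ = M * ‖s‖ := mul_comm _ _
  have h2 : ε / 2 * ‖s‖ ≤ suppF (C - C) s := hlow s
  have h2pos : (0:ℝ) < ε / 2 * ‖s‖ := by positivity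
  calc breadthF K C s ≤ 2 * (M * ‖s‖) / (ε / 2 * ‖s‖) := by
        apply div_le_div₀ (by positivity) (by linarith) h2pos h2
    _ = 2 * M / (ε / 2) := by field_simp

lemma diamF_nonneg {K C : Set (Euc n)} (hK : IsBody K) (hC : IsBody C) :
    0 ≤ diamF K C :=
  Real.sSup_nonneg (by rintro d ⟨s, hs, rfl⟩; exact breadth_nonneg hK hC s)

lemma breadth_le_diam {K C : Set (Euc n)} (hK : IsBody K) (hC : IsBody C)
    (hCint : (interior C).Nonempty) {s : Euc n} (hs : s ≠ 0) :
    breadthF K C s ≤ diamF K C :=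
  le_csSup (breadth_bddAbove hK hC hCint) ⟨s, hs, rfl⟩

lemma suppF_KK_le {K C : Set (Euc n)} (hK : IsBody K) (hC : IsBody C)
    (hCint : (interior C).Nonempty) (s : Euc n) :
    suppF (K - K) s ≤ diamF K C / 2 * suppF (C - C) s := by
  rcases eq_or_ne s 0 with rfl | hs
  · simp [suppF_zero (nonempty_sub hK.2.2 hK.2.2), suppF_zero (nonempty_sub hC.2.2 hC.2.2)]
  have h2 := CC_pos hC hCint hs
  have hb := breadth_le_diam hK hC hCint hs
  rw [breadthF, div_le_iff₀ h2] at hb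
  linarith

lemma ballC_compact {C : Set (Euc n)} (hC : IsBody C) (c : ℝ) :
    IsCompact (c • (C - C)) := by
  rw [← Set.image_smul]
  exact (isCompact_sub hC.2.1 hC.2.1).image (continuous_const_smul c)

lemma ballC_convex {C : Set (Euc n)} (hC : IsBody C) (c : ℝ) :
    Convex ℝ (c • (C - C)) := (hC.1.sub hC.1).smul c

lemma ballC_zero_mem {C : Set (Euc n)} (hC : IsBody C) (c : ℝ) :
    (0 : Euc n) ∈ c • (C - C) := by
  simpa using Set.smul_mem_smul_set (a := c) (zero_mem_sub hC.2.2)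

lemma ballC_symm {C : Set (Euc n)} {c : ℝ} {z : Euc n} (hz : z ∈ c • (C - C)) :
    -z ∈ c • (C - C) := by
  obtain ⟨w, ⟨u, hu, v, hv, rfl⟩, rfl⟩ := hz
  exact ⟨v - u, Set.sub_mem_sub hv hu, by rw [← smul_neg, neg_sub]⟩

lemma KK_subset_ball {K C : Set (Euc n)} (hK : IsBody K) (hC : IsBody C)
    (hCint : (interior C).Nonempty) :
    K - K ⊆ (diamF K C / 2) • (C - C) := by
  intro z hz
  have hD : 0 ≤ diamF K C / 2 := by have := diamF_nonneg hK hC; linarith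
  apply mem_of_forall_inner_le (ballC_compact hC _) (ballC_convex hC _)
    ⟨0, ballC_zero_mem hC _⟩
  intro s
  rw [suppF_smul hD]
  calc (inner ℝ s z : ℝ) ≤ suppF (K - K) s := le_suppF (isCompact_sub hK.2.1 hK.2.1) hz s
    _ ≤ diamF K C / 2 * suppF (C - C) s := suppF_KK_le hK hC hCint s

lemma extremePoint_mem_frontier (hn : 0 < n) {K : Set (Euc n)} (hK : IsBody K)
    {e : Euc n} (he : e ∈ K.extremePoints ℝ) : e ∈ frontier K := by
  rw [frontier, hK.2.1.isClosed.closure_eq]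
  refine ⟨he.1, fun hint => ?_⟩
  obtain ⟨ε, hε, hball⟩ := Metric.isOpen_iff.1 isOpen_interior e hint
  set u : Euc n := (ε / 2) • EuclideanSpace.single ⟨0, hn⟩ (1:ℝ) with hu
  have hun : ‖u‖ = ε / 2 := by
    rw [hu, norm_smul, EuclideanSpace.norm_single, norm_one, mul_one, Real.norm_eq_abs,
      abs_of_pos (by positivity)]
  have hu0 : u ≠ 0 := by
    intro h
    rw [h, norm_zero] at hun
    linarith
  have hmem : ∀ v : Euc n, ‖v‖ = ε / 2 → e + v ∈ K := by
    intro v hv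
    apply interior_subset
    apply hball
    rw [Metric.mem_ball, dist_eq_norm, add_sub_cancel_left, hv]
    linarith
  have h1 : e + u ∈ K := hmem u hun
  have h2 : e - u ∈ K := by
    have := hmem (-u) (by rwa [norm_neg])
    rwa [← sub_eq_add_neg] at this
  have hseg : e ∈ openSegment ℝ (e - u) (e + u) := by
    refine ⟨1/2, 1/2, by norm_num, by norm_num, by norm_num, ?_⟩
    rw [smul_sub, smul_add]
    abel_nf
    module
  have := he.2 h2 h1 hseg
  apply hu0
  have h3 : e - u = e := this
  have := sub_eq_self.1 h3
  simpa using this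


/-- completeness is equivalent to the spherical intersection property
with respect to `C - C`. -/
theorem complete_iff_spherical_intersection {n : ℕ} (K C : Set (Euc n))
    (hK : IsBody K) (hC : IsBody C) (hCint : (interior C).Nonempty) :
    CompleteWrt K C ↔
      K = ⋂ x ∈ frontier K, (x +ᵥ (diamF K C / 2) • (C - C)) := by

  rcases Nat.eq_zero_or_pos n with h0 | hn
  · subst h0
    haveI : Subsingleton (Euc 0) :=
      ⟨fun a b => PiLp.ext fun i => absurd i.2 (by omega)⟩
    obtain ⟨x0, hx0⟩ := hK.2.2
    have hKuniv : K = Set.univ := by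
      ext z
      simp only [Set.mem_univ, iff_true]
      rwa [Subsingleton.elim z x0]
    constructor
    · intro _
      rw [hKuniv, frontier_univ]
      simp
    · intro _ K' hK' hss
      exfalso
      rw [hKuniv] at hss
      exact hss.not_subset (Set.subset_univ K')
  -- main case n > 0
  set D := diamF K C with hD
  set B := (D / 2) • (C - C) with hBdef
  have hDnn : 0 ≤ D := diamF_nonneg hK hC
  have hBcomp : IsCompact B := ballC_compact hC _
  have hBconv : Convex ℝ B := ballC_convex hC _
  have hB0 : (0 : Euc n) ∈ B := ballC_zero_mem hC _
  have hBne : B.Nonempty := ⟨0, hB0⟩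
  have hsupB : ∀ s, suppF B s = D / 2 * suppF (C - C) s := fun s =>
    suppF_smul (by linarith) s
  constructor
  · -- completeness → SIP
    intro hcomp
    apply Set.Subset.antisymm
    · intro x hx
      apply Set.mem_iInter₂.2
      intro b hb
      rw [Set.mem_vadd_set_iff_neg_vadd_mem]
      have : x - b ∈ B := KK_subset_ball hK hC hCint
        (Set.sub_mem_sub hx (hK.2.1.isClosed.frontier_subset hb))
      simpa [neg_add_eq_sub] using this
    · intro y hy
      by_contra hyK
      -- K' is the closed convex hull of K ∪ {y}
      set A := insert y K with hA
      have hAcomp : IsCompact A := hK.2.1.insert y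
      have hAne : A.Nonempty := ⟨y, Set.mem_insert y K⟩
      set K' := closure (convexHull ℝ A) with hK'def
      have hK'comp : IsCompact K' := isCompact_closure_convexHull hAcomp
      have hK'conv : Convex ℝ K' := (convex_convexHull ℝ A).closure
      have hAK' : A ⊆ K' := (subset_convexHull ℝ A).trans subset_closure
      have hKK' : K ⊆ K' := (Set.subset_insert y K).trans hAK'
      have hyK' : y ∈ K' := hAK' (Set.mem_insert y K)
      have hK'ne : K'.Nonempty := ⟨y, hyK'⟩
      have hss : K ⊂ K' := ⟨hKK', fun h => hyK (h hyK')⟩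
      -- every point of K is within B of y
      have hyB : ∀ x ∈ K, y - x ∈ B := by
        have hPconv : Convex ℝ {x : Euc n | y - x ∈ B} := by
          intro a ha b hb p q hp hq hpq
          simp only [Set.mem_setOf_eq] at *
          have : y - (p • a + q • b) = p • (y - a) + q • (y - b) := by
            rw [smul_sub, smul_sub]
            have : y = p • y + q • y := by rw [← add_smul, hpq, one_smul]
            nth_rewrite 1 [this]
            abel
          rw [this]
          exact hBconv ha hb hp hq hpq
        have hPclosed : IsClosed {x : Euc n | y - x ∈ B} :=
          IsClosed.preimage (continuous_const.sub continuous_id) hBcomp.isClosed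
        have hext : K.extremePoints ℝ ⊆ {x : Euc n | y - x ∈ B} := by
          intro e he
          have hef : e ∈ frontier K := extremePoint_mem_frontier hn hK he
          have := Set.mem_iInter₂.1 hy e hef
          rw [Set.mem_vadd_set_iff_neg_vadd_mem] at this
          simpa [neg_add_eq_sub] using this
        have hKM := closure_convexHull_extremePoints hK.2.1 hK.1
        intro x hx
        rw [← hKM] at hx
        exact closure_minimal (convexHull_min hext hPconv) hPclosed hx
      -- support bound for K'
      have hkey : ∀ s : Euc n, suppF (K' - K') s ≤ D / 2 * suppF (C - C) s := by
        intro s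
        have hm0 : 0 ≤ D / 2 * suppF (C - C) s := by
          have := suppF_sub_nonneg hC.2.1 hC.2.2 s
          positivity
        have hsK' : ∀ t : Euc n, suppF K' t = max (inner ℝ t y : ℝ) (suppF K t) := by
          intro t
          rw [hK'def, suppF_closure_convexHull hAcomp hAne, hA,
            suppF_insert hK.2.1 hK.2.2]
        rw [suppF_sub hK'comp hK'comp hK'ne hK'ne, hsK', hsK']
        -- four cases
        have c1 : suppF K s + suppF K (-s) ≤ D / 2 * suppF (C - C) s := by
          rw [← suppF_sub hK.2.1 hK.2.1 hK.2.2 hK.2.2]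
          exact suppF_KK_le hK hC hCint s
        have c2 : (inner ℝ s y : ℝ) + suppF K (-s) ≤ D / 2 * suppF (C - C) s := by
          have hsub : {y} - K ⊆ B := by
            rintro z ⟨a, ha, b, hb, rfl⟩
            rw [Set.mem_singleton_iff] at ha
            subst ha
            exact hyB b hb
          have := suppF_mono (nonempty_sub (Set.singleton_nonempty y) hK.2.2) hBcomp hsub s
          rw [suppF_sub isCompact_singleton hK.2.1 (Set.singleton_nonempty y) hK.2.2,
            suppF_singleton] at this
          rw [← hsupB s]
          exact this
        have c3 : suppF K s + (inner ℝ (-s) y : ℝ) ≤ D / 2 * suppF (C - C) s := by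
          have hsub : K - {y} ⊆ B := by
            rintro z ⟨a, ha, b, hb, rfl⟩
            rw [Set.mem_singleton_iff] at hb
            subst hb
            have := ballC_symm (hyB a ha)
            rwa [neg_sub] at this
          have := suppF_mono (nonempty_sub hK.2.2 (Set.singleton_nonempty y)) hBcomp hsub s
          rw [suppF_sub hK.2.1 isCompact_singleton hK.2.2 (Set.singleton_nonempty y),
            suppF_singleton] at this
          rw [← hsupB s]
          exact this
        have c4 : (inner ℝ s y : ℝ) + (inner ℝ (-s) y : ℝ) ≤ D / 2 * suppF (C - C) s := by
          rw [inner_neg_left]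
          linarith [hm0]
        rcases max_choice (inner ℝ s y : ℝ) (suppF K s) with h | h <;>
          rcases max_choice (inner ℝ (-s) y : ℝ) (suppF K (-s)) with h' | h' <;>
          rw [h, h']
        · exact c4
        · exact c2
        · exact c3
        · exact c1
      -- diamF K' C = D
      have hK'body : IsBody K' := ⟨hK'conv, hK'comp, hK'ne⟩
      have hdiam_le : diamF K' C ≤ D := by
        apply Real.sSup_le _ hDnn
        rintro d ⟨s, hs, rfl⟩
        have h2 := CC_pos hC hCint hs
        rw [breadthF, div_le_iff₀ h2]
        have := hkey s
        linarith
      have hdiam_ge : D ≤ diamF K' C := by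
        apply Real.sSup_le _ (diamF_nonneg hK'body hC)
        rintro d ⟨s, hs, rfl⟩
        have h2 := CC_pos hC hCint hs
        have hmono : suppF (K - K) s ≤ suppF (K' - K') s :=
          suppF_mono (nonempty_sub hK.2.2 hK.2.2) (isCompact_sub hK'comp hK'comp)
            (Set.sub_subset_sub hKK' hKK') s
        calc breadthF K C s ≤ breadthF K' C s := by
              rw [breadthF, breadthF]
              exact (div_le_div_iff_of_pos_right h2).2 (by linarith)
          _ ≤ diamF K' C := breadth_le_diam hK'body hC hCint hs
      have heqd : diamF K' C = D := le_antisymm hdiam_le hdiam_ge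
      have hlt := hcomp K' hK'body hss
      rw [heqd] at hlt
      exact lt_irrefl D hlt
  · -- SIP → completeness
    intro heq K' hK' hss
    obtain ⟨y, hyK', hyK⟩ := Set.exists_of_ssubset hss
    have hyI : y ∉ ⋂ x ∈ frontier K, (x +ᵥ B) := by rwa [← heq]
    simp only [Set.mem_iInter, not_forall] at hyI
    obtain ⟨x, hxf, hyx⟩ := hyI
    have hyxB : y - x ∉ B := by
      intro h
      apply hyx
      rw [Set.mem_vadd_set_iff_neg_vadd_mem]
      simpa [neg_add_eq_sub] using h
    obtain ⟨s, hsep⟩ := exists_suppF_lt hBcomp hBconv hBne hyxB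
    have hs : s ≠ 0 := by
      rintro rfl
      rw [suppF_zero hBne] at hsep
      simp at hsep
    have h2 := CC_pos hC hCint hs
    have hxK' : x ∈ K' := hss.subset (hK.2.1.isClosed.frontier_subset hxf)
    have hmem : y - x ∈ K' - K' := Set.sub_mem_sub hyK' hxK'
    have h1 : (inner ℝ s (y - x) : ℝ) ≤ suppF (K' - K') s :=
      le_suppF (isCompact_sub hK'.2.1 hK'.2.1) hmem s
    have hlt : D < breadthF K' C s := by
      rw [breadthF, lt_div_iff₀ h2]
      have := hsupB s
      nlinarith [hsep, h1]
    calc diamF K C = D := rfl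
      _ < breadthF K' C s := hlt
      _ ≤ diamF K' C := breadth_le_diam hK' hC hCint hs
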